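/- Multiplicative Schur theorem: for every finite coloring C : ℕ → Fin r of the positive integers greater than 1, there exist x ≠ y such that x, y, and x·y receive the same color. -/

import Mathlib

lemma FP_two_le (a : Stream' ℕ) (ha : ∀ n, 2 ≤ a.get n) : ∀ m ∈ Hindman.FP a, 2 ≤ m := by
  intro m hm
  induction hm with
  | head' a => exact ha 0
  | tail' a m h ih => exact ih fun n => ha (n + 1)
  | cons' a m h ih =>
      have h1 : 2 ≤ a.head := ha 0
      have h2 : 2 ≤ m := ih fun n => ha (n + 1)
      calc 2 ≤ a.head := h1
        _ ≤ a.head * m := Nat.le_mul_of_pos_right _ (by omega)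

theorem mult_schur (r : ℕ) (C : ℕ → Fin r) :
    ∃ x y : ℕ, 1 < x ∧ 1 < y ∧ x ≠ y ∧ C x = C y ∧ C y = C (x * y) := by
  rcases Nat.eq_zero_or_pos r with rfl | hr
  · exact (C 2).elim0
  -- stream of powers of 2
  set a : Stream' ℕ := fun n => 2 ^ (n + 1) with ha
  have ha2 : ∀ n, 2 ≤ a.get n := by
    intro n
    have : 2 ^ 1 ≤ 2 ^ (n + 1) := Nat.pow_le_pow_right (by norm_num) (by omega)
    simpa [ha, Stream'.get] using this
  set s : Set (Set ℕ) := Set.range (fun i : Fin r => {n | 2 ≤ n ∧ C n = i}) with hs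
  have sfin : s.Finite := Set.finite_range _
  have scov : Hindman.FP a ⊆ ⋃₀ s := by
    intro m hm
    exact ⟨{n | 2 ≤ n ∧ C n = C m}, ⟨C m, rfl⟩, FP_two_le a ha2 m hm, rfl⟩
  obtain ⟨c, hc, b, hb⟩ := Hindman.FP_partition_regular a s sfin scov
  obtain ⟨i, rfl⟩ := hc
  have key : ∀ m ∈ Hindman.FP b, 2 ≤ m ∧ C m = i := fun m hm => hb hm
  have h0 := key _ (Hindman.FP.singleton b 0)
  have h1 := key _ (Hindman.FP.singleton b 1)
  have h2 := key _ (Hindman.FP.singleton b 2)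
  by_cases hxy : b.get 0 = b.get 1
  · -- use x = b0, y = b1*b2
    have hy : b.get 1 * b.get 2 ∈ Hindman.FP b := Hindman.FP.mul_two b 1 2 (by omega)
    have hYk := key _ hy
    have hprod : b.get 0 * (b.get 1 * b.get 2) ∈ Hindman.FP b := by
      have : b.get 1 * b.get 2 ∈ Hindman.FP b.tail := by
        have := Hindman.FP.mul_two b.tail 0 1 (by omega)
        simpa [Stream'.get_tail] using this
      simpa using Hindman.FP.cons b _ this
    have hPk := key _ hprod
    refine ⟨b.get 0, b.get 1 * b.get 2, by omega, by omega, ?_, by rw [h0.2, hYk.2], by rw [hYk.2, hPk.2]⟩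
    have : b.get 1 < b.get 1 * b.get 2 := by nlinarith [h1.1, h2.1]
    omega
  · have hprod : b.get 0 * b.get 1 ∈ Hindman.FP b := Hindman.FP.mul_two b 0 1 (by omega)
    have hPk := key _ hprod
    exact ⟨b.get 0, b.get 1, by omega, by omega, hxy, by rw [h0.2, h1.2], by rw [h1.2, hPk.2]⟩
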